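/- For d ≥ 2, the Holevo quantity χ(d) = log d + H(½ + 1/(2d²)) − H_min(d), with H(t) = −t log t − (1−t) log(1−t) and H_min(d) = −[((d+1)/(2d²))log((d+1)/(2d²)) + ((d−1)/(2d²))log((d−1)/(2d²)) + ((d−1)/d)log(1/(2d))], is strictly decreasing in d; in particular it is maximal at d = 2. -/

import Mathlib

/-- The closed-form Holevo information of the quantum SWITCH of two completely
depolarizing channels on a `d`-dimensional system with control in `|+⟩`,
as a function of a real variable `d`. -/
noncomputable def switchChi (d : ℝ) : ℝ :=
  Real.log d
    + (-(1 / 2 + 1 / (2 * d ^ 2)) * Real.log (1 / 2 + 1 / (2 * d ^ 2))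
       - (1 / 2 - 1 / (2 * d ^ 2)) * Real.log (1 / 2 - 1 / (2 * d ^ 2)))
    - (-((d + 1) / (2 * d ^ 2) * Real.log ((d + 1) / (2 * d ^ 2))
        + (d - 1) / (2 * d ^ 2) * Real.log ((d - 1) / (2 * d ^ 2))
        + (d - 1) / d * Real.log (1 / (2 * d))))

open Real

/-- auxiliary function: `switchChi d = gAux (1/d)` for `d ≥ 2`. -/
noncomputable def gAux (x : ℝ) : ℝ :=
  ((1 + x) * (2 * x - 1) * Real.log (1 + x) - (1 - x) * Real.log (1 - x)
    - (1 + x ^ 2) * Real.log (1 + x ^ 2)) / 2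

lemma log_one_add_ge {x : ℝ} (h0 : 0 ≤ x) (h1 : x ≤ 1 / 2) :
    x - x ^ 2 / 2 + x ^ 3 / 3 - x ^ 4 / 4 + x ^ 5 / 5 - 2 * x ^ 6 ≤ Real.log (1 + x) := by
  have hx : |(-x)| < 1 := by rw [abs_neg, abs_of_nonneg h0]; linarith
  have h := Real.abs_log_sub_add_sum_range_le hx 5
  simp only [Finset.sum_range_succ, Finset.sum_range_zero] at h
  rw [abs_neg, abs_of_nonneg h0] at h
  have hb : x ^ 6 / (1 - x) ≤ 2 * x ^ 6 := by
    rw [div_le_iff₀ (by linarith)]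
    nlinarith [pow_nonneg h0 6]
  have h'' := (abs_le.1 h).1
  have heq : (1 : ℝ) - -x = 1 + x := by ring
  rw [heq] at h''
  have hle : x ^ 6 / (1 - x) ≤ 2 * x ^ 6 := hb
  push_cast at h''
  nlinarith [hb]

lemma log_one_sub_ge {x : ℝ} (h0 : 0 ≤ x) (h1 : x ≤ 1 / 2) :
    -x - x ^ 2 / 2 - x ^ 3 / 3 - x ^ 4 / 4 - 2 * x ^ 5 ≤ Real.log (1 - x) := by
  have hx : |x| < 1 := by rw [abs_of_nonneg h0]; linarith
  have h := Real.abs_log_sub_add_sum_range_le hx 4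
  simp only [Finset.sum_range_succ, Finset.sum_range_zero] at h
  rw [abs_of_nonneg h0] at h
  have hb : x ^ 5 / (1 - x) ≤ 2 * x ^ 5 := by
    rw [div_le_iff₀ (by linarith)]
    nlinarith [pow_nonneg h0 5]
  have h'' := (abs_le.1 h).1
  push_cast at h''
  nlinarith [hb]

lemma F_pos {x : ℝ} (hx0 : 0 < x) (hx : x < 1 / 2) :
    0 < (4 * x + 1) * Real.log (1 + x) + Real.log (1 - x) - 2 * x * Real.log (1 + x ^ 2) := by
  have hA := log_one_add_ge hx0.le hx.le
  have hB := log_one_sub_ge hx0.le hx.le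
  have hC : Real.log (1 + x ^ 2) ≤ x ^ 2 := by
    have := Real.log_le_sub_one_of_pos (show (0:ℝ) < 1 + x ^ 2 by positivity)
    linarith
  have hcoef : (0:ℝ) ≤ 4 * x + 1 := by linarith
  have h1 : (4 * x + 1) * (x - x ^ 2 / 2 + x ^ 3 / 3 - x ^ 4 / 4 + x ^ 5 / 5 - 2 * x ^ 6)
      ≤ (4 * x + 1) * Real.log (1 + x) := mul_le_mul_of_nonneg_left hA hcoef
  have h2 : 2 * x * Real.log (1 + x ^ 2) ≤ 2 * x * x ^ 2 :=
    mul_le_mul_of_nonneg_left hC (by linarith)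
  nlinarith [pow_pos hx0 2, pow_pos hx0 3, pow_pos hx0 4, pow_pos hx0 5, pow_pos hx0 6,
    mul_pos (mul_pos hx0 hx0) (sub_pos.2 hx), sq_nonneg (x - 1/2), sq_nonneg x]

lemma hasDerivAt_gAux {x : ℝ} (h1 : -1 < x) (h2 : x < 1) :
    HasDerivAt gAux
      (((4 * x + 1) * Real.log (1 + x) + Real.log (1 - x)
        - 2 * x * Real.log (1 + x ^ 2)) / 2) x := by
  have hp1 : (1 : ℝ) + x ≠ 0 := by linarith
  have hp2 : (1 : ℝ) - x ≠ 0 := by linarith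
  have hp3 : (1 : ℝ) + x ^ 2 ≠ 0 := by positivity
  have d1 : HasDerivAt (fun x : ℝ => 1 + x) 1 x := by
    simpa using (hasDerivAt_id x).const_add 1
  have d1' : HasDerivAt (fun x : ℝ => 1 - x) (-1) x := by
    simpa using (hasDerivAt_id x).const_sub 1
  have d2 : HasDerivAt (fun x : ℝ => 2 * x - 1) 2 x := by
    simpa using ((hasDerivAt_id x).const_mul 2).sub_const 1
  have dsq : HasDerivAt (fun x : ℝ => 1 + x ^ 2) (2 * x) x := by
    simpa using (hasDerivAt_pow 2 x).const_add 1
  have l1 : HasDerivAt (fun x : ℝ => Real.log (1 + x)) (1 / (1 + x)) x := by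
    simpa using d1.log hp1
  have l2 : HasDerivAt (fun x : ℝ => Real.log (1 - x)) (-1 / (1 - x)) x := by
    simpa using d1'.log hp2
  have l3 : HasDerivAt (fun x : ℝ => Real.log (1 + x ^ 2)) (2 * x / (1 + x ^ 2)) x := by
    simpa using dsq.log hp3
  have t1 : HasDerivAt (fun x : ℝ => (1 + x) * (2 * x - 1) * Real.log (1 + x))
      ((1 * (2 * x - 1) + (1 + x) * 2) * Real.log (1 + x)
        + (1 + x) * (2 * x - 1) * (1 / (1 + x))) x := (d1.mul d2).mul l1
  have t2 : HasDerivAt (fun x : ℝ => (1 - x) * Real.log (1 - x))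
      ((-1) * Real.log (1 - x) + (1 - x) * (-1 / (1 - x))) x := d1'.mul l2
  have t3 : HasDerivAt (fun x : ℝ => (1 + x ^ 2) * Real.log (1 + x ^ 2))
      (2 * x * Real.log (1 + x ^ 2) + (1 + x ^ 2) * (2 * x / (1 + x ^ 2))) x := dsq.mul l3
  have := ((t1.sub t2).sub t3).div_const 2
  convert this using 1
  · rfl
  · rfl
  · rfl
  field_simp
  ring

lemma gAux_strictMono : StrictMonoOn gAux (Set.Icc (0 : ℝ) (1 / 2)) := by
  apply strictMonoOn_of_deriv_pos (convex_Icc _ _)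
  · intro x hx
    have h1 : (-1 : ℝ) < x := by have := hx.1; linarith
    have h2 : x < 1 := by have := hx.2; linarith
    exact (hasDerivAt_gAux h1 h2).continuousAt.continuousWithinAt
  · intro x hx
    rw [interior_Icc] at hx
    have h1 : (-1 : ℝ) < x := by linarith [hx.1]
    have h2 : x < 1 := by linarith [hx.2]
    rw [(hasDerivAt_gAux h1 h2).deriv]
    have := F_pos hx.1 hx.2
    linarith

lemma switchChi_eq_gAux {d : ℝ} (hd : 2 ≤ d) : switchChi d = gAux (1 / d) := by
  have hd0 : (0 : ℝ) < d := by linarith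
  have hm1 : (0 : ℝ) < d - 1 := by linarith
  have hp1 : (0 : ℝ) < d + 1 := by linarith
  have hsq : (0 : ℝ) < d ^ 2 := by positivity
  have hsq1 : (0 : ℝ) < d ^ 2 + 1 := by positivity
  have h2d : (0 : ℝ) < 2 * d ^ 2 := by positivity
  unfold switchChi gAux
  have e1 : 1 / 2 + 1 / (2 * d ^ 2) = (d ^ 2 + 1) / (2 * d ^ 2) := by field_simp
  have e2 : 1 / 2 - 1 / (2 * d ^ 2) = ((d - 1) * (d + 1)) / (2 * d ^ 2) := by field_simp; ring_nf
  have e3 : 1 + 1 / d = (d + 1) / d := by field_simp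
  have e4 : 1 - 1 / d = (d - 1) / d := by field_simp
  have e5 : 1 + (1 / d) ^ 2 = (d ^ 2 + 1) / d ^ 2 := by field_simp
  rw [e1, e2, e3, e4, e5]
  have l2d2 : Real.log (2 * d ^ 2) = Real.log 2 + 2 * Real.log d := by
    rw [Real.log_mul (by norm_num) hsq.ne', Real.log_pow]; push_cast; ring
  have l1 : Real.log ((d ^ 2 + 1) / (2 * d ^ 2))
      = Real.log (d ^ 2 + 1) - (Real.log 2 + 2 * Real.log d) := by
    rw [Real.log_div hsq1.ne' h2d.ne', l2d2]
  have l2 : Real.log ((d - 1) * (d + 1) / (2 * d ^ 2))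
      = Real.log (d - 1) + Real.log (d + 1) - (Real.log 2 + 2 * Real.log d) := by
    rw [Real.log_div (by positivity) h2d.ne', Real.log_mul hm1.ne' hp1.ne', l2d2]
  have l3 : Real.log ((d + 1) / (2 * d ^ 2))
      = Real.log (d + 1) - (Real.log 2 + 2 * Real.log d) := by
    rw [Real.log_div hp1.ne' h2d.ne', l2d2]
  have l4 : Real.log ((d - 1) / (2 * d ^ 2))
      = Real.log (d - 1) - (Real.log 2 + 2 * Real.log d) := by
    rw [Real.log_div hm1.ne' h2d.ne', l2d2]
  have l5 : Real.log (1 / (2 * d)) = -(Real.log 2 + Real.log d) := by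
    rw [one_div, Real.log_inv, Real.log_mul (by norm_num) hd0.ne']
  have l6 : Real.log ((d + 1) / d) = Real.log (d + 1) - Real.log d :=
    Real.log_div hp1.ne' hd0.ne'
  have l7 : Real.log ((d - 1) / d) = Real.log (d - 1) - Real.log d :=
    Real.log_div hm1.ne' hd0.ne'
  have l8 : Real.log ((d ^ 2 + 1) / d ^ 2) = Real.log (d ^ 2 + 1) - 2 * Real.log d := by
    rw [Real.log_div hsq1.ne' hsq.ne', Real.log_pow]; push_cast; ring
  rw [l1, l2, l3, l4, l5, l6, l7, l8]
  field_simp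
  ring

theorem switchChi_strictly_decreasing :
    (∀ m n : ℕ, 2 ≤ m → m < n → switchChi (n : ℝ) < switchChi (m : ℝ)) ∧
    (∀ n : ℕ, 2 ≤ n → switchChi (n : ℝ) ≤ switchChi 2) := by
  have key : ∀ m n : ℕ, 2 ≤ m → m < n → switchChi (n : ℝ) < switchChi (m : ℝ) := by
    intro m n hm hmn
    have hm2 : (2 : ℝ) ≤ (m : ℝ) := by exact_mod_cast hm
    have hn2 : (2 : ℝ) ≤ (n : ℝ) := by exact_mod_cast hm.trans hmn.le
    have hmn' : (m : ℝ) < (n : ℝ) := by exact_mod_cast hmn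
    have hm0 : (0 : ℝ) < (m : ℝ) := by linarith
    have hn0 : (0 : ℝ) < (n : ℝ) := by linarith
    rw [switchChi_eq_gAux hn2, switchChi_eq_gAux hm2]
    apply gAux_strictMono
    · exact ⟨by positivity, one_div_le_one_div_of_le (by norm_num) hn2⟩
    · exact ⟨by positivity, one_div_le_one_div_of_le (by norm_num) hm2⟩
    · exact one_div_lt_one_div_of_lt hm0 hmn'
  refine ⟨key, ?_⟩
  intro n hn
  have hc : ((2 : ℕ) : ℝ) = (2 : ℝ) := by norm_num
  rcases eq_or_lt_of_le hn with h | h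
  · rw [← h, hc]
  · have := key 2 n le_rfl h
    rw [hc] at this
    exact this.le
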